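/- With the setting of the previous statement, for I, J with I_{π(n-1)} = J_{π(n-1)}, u the largest index with I_{π(u)} ≠ J_{π(u)}, and J^k defined from J the same way I^k is from I (so that I^k - J^k = I - J), one has (H(I) - H(J)) - (H(I^k) - H(J^k)) ≡ (q/p)·k·(I_{π(u)} - J_{π(u)}) mod q, since I_{π(u+2)} = J_{π(u+2)} (or u = n-2). Consequently, ∑_{k=0}^{p-1} ζ_q^{(H(I)-H(J)) - (H(I^k)-H(J^k))} = ∑_{k=0}^{p-1} ζ_p^{k·(I_{π(u)}-J_{π(u)})} = 0, where I^0 = I, J^0 = J. -/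

import Mathlib

/-- `ζ_q^e` for an integer exponent `e`. -/
noncomputable def zeta (q : ℕ) (e : ℤ) : ℂ :=
  Complex.exp (2 * Real.pi * Complex.I * (e : ℂ) / (q : ℂ))

/-- the `i`-th base-`p` digit of `I`, for vectors of length `m`. -/
def dgt (p m i I : ℕ) : ℕ := I / p ^ (m - 1 - i) % p

/-- `H(x) = (q/p)·∑_{i=1}^{n-1} x_{π(i-1)}x_{π(i)} + ∑ γ_i x_i + θ`. -/
def Hval (p q n : ℕ) (π : Equiv.Perm (Fin n)) (γ : Fin n → ℕ) (θ : ℕ)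
    (x : Fin n → ℕ) : ℤ :=
  ((q / p : ℕ) : ℤ) *
    (∑ i : Fin n, if h : 1 ≤ (i : ℕ) then
        (x (π ⟨(i : ℕ) - 1, by omega⟩) : ℤ) * (x (π i) : ℤ) else 0)
  + ∑ i : Fin n, (γ i : ℤ) * (x i : ℤ) + (θ : ℤ)

/-- the digit vector of `I^k`: the base-`p` digits of `I`, with the digit at position
`π(w)` replaced by `(I_{π(w)} - k) mod p`.  For `k = 0` this is the digit vector of `I`. -/
def modDig (p n : ℕ) (π : Equiv.Perm (Fin n)) (w : Fin n) (k I : ℕ) : Fin n → ℕ :=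
  fun i => if i = π w then (dgt p n (π w) I + (p - k)) % p else dgt p n i I

lemma zeta_congr {q : ℕ} (hq : 0 < q) {a b : ℤ} (h : a ≡ b [ZMOD (q:ℤ)]) :
    zeta q a = zeta q b := by
  obtain ⟨t, ht⟩ := Int.modEq_iff_dvd.mp h
  have hb : b = a + q * t := by linarith
  subst hb
  unfold zeta
  have hq' : (q:ℂ) ≠ 0 := by exact_mod_cast hq.ne'
  have : 2 * (Real.pi:ℂ) * Complex.I * ((a + q*t : ℤ) : ℂ) / q
      = 2 * Real.pi * Complex.I * (a:ℂ) / q + t * (2 * Real.pi * Complex.I) := by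
    push_cast
    field_simp
  rw [this, Complex.exp_add, Complex.exp_int_mul_two_pi_mul_I, mul_one]

lemma zeta_qdvp {p q : ℕ} (hp : 0 < p) (hq : 0 < q) (hpq : p ∣ q) (m : ℤ) :
    zeta q (((q/p : ℕ) : ℤ) * m) = zeta p m := by
  obtain ⟨c, rfl⟩ := hpq
  have hc : 0 < c := by
    by_contra h
    push_neg at h
    interval_cases c <;> simp_all
  rw [Nat.mul_div_cancel_left _ hp]
  unfold zeta
  congr 1
  have hp' : (p:ℂ) ≠ 0 := by exact_mod_cast hp.ne'
  have hc' : (c:ℂ) ≠ 0 := by exact_mod_cast hc.ne'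
  push_cast
  field_simp

lemma zeta_pow (q : ℕ) (e : ℤ) (k : ℕ) : zeta q ((k:ℤ) * e) = zeta q e ^ k := by
  unfold zeta
  rw [← Complex.exp_nat_mul]
  congr 1
  push_cast
  ring

lemma zeta_sum_eq_zero {p : ℕ} (hp : 2 ≤ p) {d : ℤ} (hd : d ≠ 0) (hdlt : d.natAbs < p) :
    ∑ k ∈ Finset.range p, zeta p ((k:ℤ) * d) = 0 := by
  have hp0 : 0 < p := by omega
  have hz1 : zeta p d ≠ 1 := by
    intro h
    unfold zeta at h
    rw [Complex.exp_eq_one_iff] at h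
    obtain ⟨m, hm⟩ := h
    have hp' : (p:ℂ) ≠ 0 := by exact_mod_cast hp0.ne'
    have h2 : (2 * (Real.pi:ℂ) * Complex.I) ≠ 0 := by
      simp [Real.pi_ne_zero, Complex.I_ne_zero]
    have : (d:ℂ) = (m:ℂ) * p := by
      field_simp at hm
      rcases mul_eq_mul_left_iff.mp (by linear_combination (2 * (Real.pi:ℂ) * Complex.I) * hm : (2 * (Real.pi:ℂ) * Complex.I) * (d:ℂ) = (2 * (Real.pi:ℂ) * Complex.I) * ((m:ℂ) * p)) with h | h
      · exact h
      · exact absurd h h2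
    have hd' : d = m * p := by exact_mod_cast this
    have : (p:ℤ) ∣ d := ⟨m, by linarith⟩
    have h2 : (p:ℤ) ≤ |d| := Int.le_of_dvd (abs_pos.mpr hd) ((dvd_abs _ _).mpr this)
    rw [Int.abs_eq_natAbs] at h2
    omega
  calc ∑ k ∈ Finset.range p, zeta p ((k:ℤ) * d)
      = ∑ k ∈ Finset.range p, zeta p d ^ k := by
        exact Finset.sum_congr rfl fun k _ => zeta_pow p d k
    _ = (zeta p d ^ p - 1) / (zeta p d - 1) := geom_sum_eq hz1 p
    _ = 0 := by
        have : zeta p d ^ p = 1 := by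
          rw [← zeta_pow]
          unfold zeta
          have hp' : (p:ℂ) ≠ 0 := by exact_mod_cast hp0.ne'
          have : 2 * (Real.pi:ℂ) * Complex.I * (((p:ℤ) * d : ℤ):ℂ) / p = d * (2 * Real.pi * Complex.I) := by
            push_cast; field_simp
          rw [this, Complex.exp_int_mul_two_pi_mul_I]
        rw [this]; simp

lemma Hval_sub_modDig (p q n : ℕ) (π : Equiv.Perm (Fin n)) (γ : Fin n → ℕ) (θ : ℕ)
    (u : ℕ) (hu : u + 2 ≤ n) (k M : ℕ) :
    Hval p q n π γ θ (fun i => dgt p n i M)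
      - Hval p q n π γ θ (modDig p n π ⟨u + 1, by omega⟩ k M)
    = ((q / p : ℕ) : ℤ) *
        (((dgt p n (π ⟨u, by omega⟩) M : ℤ)
          + (if h : u + 2 < n then (dgt p n (π ⟨u + 2, h⟩) M : ℤ) else 0)) *
         ((dgt p n (π ⟨u + 1, by omega⟩) M : ℤ)
          - (((dgt p n (π ⟨u + 1, by omega⟩) M + (p - k)) % p : ℕ) : ℤ)))
      + (γ (π ⟨u + 1, by omega⟩) : ℤ) *
         ((dgt p n (π ⟨u + 1, by omega⟩) M : ℤ)
          - (((dgt p n (π ⟨u + 1, by omega⟩) M + (p - k)) % p : ℕ) : ℤ)) := by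
  set w : Fin n := ⟨u + 1, by omega⟩ with hw
  set x : Fin n → ℕ := fun i => dgt p n i M with hx
  set y : Fin n → ℕ := modDig p n π w k M with hy
  have hyx : ∀ i, i ≠ π w → y i = x i := by
    intro i hi
    simp [hy, modDig, hi, hx]
  have hyw : y (π w) = (dgt p n (π w) M + (p - k)) % p := by simp [hy, modDig]
  -- linear part
  have hlin : (∑ i : Fin n, (γ i : ℤ) * (x i : ℤ)) - (∑ i : Fin n, (γ i : ℤ) * (y i : ℤ))
      = (γ (π w) : ℤ) * ((x (π w) : ℤ) - (y (π w) : ℤ)) := by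
    rw [← Finset.sum_sub_distrib]
    rw [Fintype.sum_eq_single (π w)]
    · ring
    · intro i hi
      rw [hyx i hi]; ring
  -- quadratic part
  have hπne : ∀ a b : Fin n, a ≠ b → π a ≠ π b := fun a b h hh => h (π.injective hh)
  have hquad : (∑ i : Fin n, if h : 1 ≤ (i : ℕ) then
        (x (π ⟨(i : ℕ) - 1, by omega⟩) : ℤ) * (x (π i) : ℤ) else 0)
      - (∑ i : Fin n, if h : 1 ≤ (i : ℕ) then
        (y (π ⟨(i : ℕ) - 1, by omega⟩) : ℤ) * (y (π i) : ℤ) else 0)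
      = ((dgt p n (π ⟨u, by omega⟩) M : ℤ)
          + (if h : u + 2 < n then (dgt p n (π ⟨u + 2, h⟩) M : ℤ) else 0))
        * ((x (π w) : ℤ) - (y (π w) : ℤ)) := by
    rw [← Finset.sum_sub_distrib]
    set f : Fin n → ℤ := fun i =>
        (if h : 1 ≤ (i : ℕ) then
          (x (π ⟨(i : ℕ) - 1, by omega⟩) : ℤ) * (x (π i) : ℤ) else 0)
        - (if h : 1 ≤ (i : ℕ) then
          (y (π ⟨(i : ℕ) - 1, by omega⟩) : ℤ) * (y (π i) : ℤ) else 0) with hf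
    have hfw : f w = (dgt p n (π ⟨u, by omega⟩) M : ℤ) * ((x (π w) : ℤ) - (y (π w) : ℤ)) := by
      have h1 : 1 ≤ (w : ℕ) := by simp [hw]
      have e0 : (⟨(w : ℕ) - 1, by omega⟩ : Fin n) = ⟨u, by omega⟩ := by
        simp [hw, Fin.ext_iff]
      have e1 : y (π ⟨u, by omega⟩) = x (π ⟨u, by omega⟩) := by
        apply hyx
        exact hπne _ _ (by simp [hw, Fin.ext_iff])
      simp only [hf, dif_pos h1, e0, e1]
      have : x (π ⟨u, by omega⟩) = dgt p n (π ⟨u, by omega⟩) M := rfl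
      rw [this]; ring
    by_cases hlt : u + 2 < n
    · have h0 : ∀ i : Fin n, i ≠ w ∧ i ≠ ⟨u + 2, hlt⟩ → f i = 0 := by
        intro i hi
        obtain ⟨hi1, hi2⟩ := hi
        by_cases h1 : 1 ≤ (i : ℕ)
        · have e1 : y (π i) = x (π i) := by
            apply hyx; apply hπne; exact hi1
          have e2 : y (π ⟨(i : ℕ) - 1, by omega⟩) = x (π ⟨(i : ℕ) - 1, by omega⟩) := by
            apply hyx; apply hπne
            intro h
            have : (i:ℕ) - 1 = u + 1 := by simpa [hw, Fin.ext_iff] using h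
            have : (i:ℕ) = u + 2 := by omega
            exact hi2 (by simp [Fin.ext_iff, this])
          simp only [hf, dif_pos h1, e1, e2]; ring
        · simp only [hf, dif_neg h1]; ring
      have hsum := Fintype.sum_eq_add (f := f) w ⟨u + 2, hlt⟩ (by simp [hw, Fin.ext_iff]) h0
      rw [hsum]
      have hfv : f ⟨u + 2, hlt⟩
            = (dgt p n (π ⟨u + 2, hlt⟩) M : ℤ) * ((x (π w) : ℤ) - (y (π w) : ℤ)) := by
          have h1 : 1 ≤ ((⟨u + 2, hlt⟩ : Fin n) : ℕ) := by simp
          have e0 : (⟨((⟨u + 2, hlt⟩ : Fin n) : ℕ) - 1, by omega⟩ : Fin n) = w := by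
            simp [hw, Fin.ext_iff]
          have e1 : y (π ⟨u + 2, hlt⟩) = x (π ⟨u + 2, hlt⟩) := by
            apply hyx
            exact hπne _ _ (by simp [hw, Fin.ext_iff])
          simp only [hf, dif_pos h1, e0, e1]
          have : x (π ⟨u + 2, hlt⟩) = dgt p n (π ⟨u + 2, hlt⟩) M := rfl
          rw [this]; ring
      rw [hfw, hfv, dif_pos hlt]; ring
    · have hn2 : u + 2 = n := by omega
      have h0 : ∀ i : Fin n, i ≠ w → f i = 0 := by
        intro i hi1
        by_cases h1 : 1 ≤ (i : ℕ)
        · have e1 : y (π i) = x (π i) := by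
            apply hyx; apply hπne; exact hi1
          have e2 : y (π ⟨(i : ℕ) - 1, by omega⟩) = x (π ⟨(i : ℕ) - 1, by omega⟩) := by
            apply hyx; apply hπne
            intro h
            have : (i:ℕ) - 1 = u + 1 := by simpa [hw, Fin.ext_iff] using h
            have hc : (i:ℕ) = u + 2 := by omega
            have := i.isLt
            omega
          simp only [hf, dif_pos h1, e1, e2]; ring
        · simp only [hf, dif_neg h1]; ring
      have hsum := Fintype.sum_eq_single (f := f) w h0
      rw [hsum, hfw, dif_neg hlt]; ring
  -- put together
  have hxw : x (π w) = dgt p n (π w) M := rfl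
  unfold Hval
  rw [hxw] at hlin hquad
  rw [hyw] at hlin hquad
  linear_combination ((q / p : ℕ) : ℤ) * hquad + hlin

lemma cong_aux (p q : ℕ) (hp : 2 ≤ p) (hpq : p ∣ q) (k c dI dJ : ℕ) (hk : k ≤ p - 1)
    (A : ℤ)
    (hA : A = ((q / p : ℕ) : ℤ) * ((dI : ℤ) - (dJ : ℤ)) *
      ((c : ℤ) - (((c + (p - k)) % p : ℕ) : ℤ))) :
    A ≡ ((q / p : ℕ) : ℤ) * (k : ℤ) * ((dI : ℤ) - (dJ : ℤ)) [ZMOD (q : ℤ)] := by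
  subst hA
  have hkp : k ≤ p := by omega
  set ck : ℕ := (c + (p - k)) % p with hck
  set t : ℕ := (c + (p - k)) / p with ht
  have hnat : p * t + ck = c + (p - k) := Nat.div_add_mod _ _
  have hdvd : (c : ℤ) - (ck : ℤ) - (k : ℤ) = (p : ℤ) * ((t : ℤ) - 1) := by
    have hnat' : (p : ℤ) * (t : ℤ) + (ck : ℤ) = (c : ℤ) + ((p : ℤ) - (k : ℤ)) := by
      exact_mod_cast (by rw [hnat, Nat.cast_add, Nat.cast_sub hkp] :
        ((p * t + ck : ℕ) : ℤ) = (c : ℤ) + ((p : ℤ) - (k : ℤ)))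
    linarith
  have hqp : ((q / p : ℕ) : ℤ) * (p : ℤ) = (q : ℤ) := by
    exact_mod_cast congrArg (Nat.cast : ℕ → ℤ) (Nat.div_mul_cancel hpq)
  apply Int.ModEq.symm
  rw [Int.modEq_iff_dvd]
  refine ⟨((dI : ℤ) - (dJ : ℤ)) * ((t : ℤ) - 1), ?_⟩
  linear_combination ((q / p : ℕ) : ℤ) * ((dI:ℤ) - (dJ:ℤ)) * hdvd
    + ((dI:ℤ) - (dJ:ℤ)) * ((t:ℤ) - 1) * hqp

set_option maxHeartbeats 1000000 in
/-- With `I_{π(n-1)} = J_{π(n-1)}`, `u ≤ n-2` the largest index with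
`I_{π(u)} ≠ J_{π(u)}`, and `I^k, J^k` obtained by replacing digit `π(u+1)` by its shift
by `-k mod p`, one has
`(H(I)-H(J)) - (H(I^k)-H(J^k)) ≡ (q/p)·k·(I_{π(u)} - J_{π(u)}) mod q`, and consequently
`∑_{k=0}^{p-1} ζ_q^{(H(I)-H(J)) - (H(I^k)-H(J^k))} = ∑_{k=0}^{p-1} ζ_p^{k(I_{π(u)}-J_{π(u)})} = 0`. -/
theorem stmt_8 (p q n : ℕ) (hp : 2 ≤ p) (hq : 0 < q) (hpq : p ∣ q) (hn : 2 ≤ n)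
    (π : Equiv.Perm (Fin n)) (γ : Fin n → ℕ) (hγ : ∀ i, γ i < p) (θ : ℕ) (hθ : θ < q)
    (I J : ℕ) (hI : I < p ^ n) (hJ : J < p ^ n)
    (hend : dgt p n (π ⟨n - 1, by omega⟩) I = dgt p n (π ⟨n - 1, by omega⟩) J)
    (u : ℕ) (hu : u + 2 ≤ n)
    (hdiff : dgt p n (π ⟨u, by omega⟩) I ≠ dgt p n (π ⟨u, by omega⟩) J)
    (hlargest : ∀ v : Fin n, u < (v : ℕ) → dgt p n (π v) I = dgt p n (π v) J) :
    (∀ k ≤ p - 1,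
      (Hval p q n π γ θ (fun i => dgt p n i I) - Hval p q n π γ θ (fun i => dgt p n i J))
        - (Hval p q n π γ θ (modDig p n π ⟨u + 1, by omega⟩ k I)
            - Hval p q n π γ θ (modDig p n π ⟨u + 1, by omega⟩ k J))
      ≡ ((q / p : ℕ) : ℤ) * (k : ℤ) *
          ((dgt p n (π ⟨u, by omega⟩) I : ℤ) - (dgt p n (π ⟨u, by omega⟩) J : ℤ))
        [ZMOD (q : ℤ)]) ∧
    (∑ k ∈ Finset.range p,
        zeta q ((Hval p q n π γ θ (fun i => dgt p n i I)
              - Hval p q n π γ θ (fun i => dgt p n i J))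
          - (Hval p q n π γ θ (modDig p n π ⟨u + 1, by omega⟩ k I)
              - Hval p q n π γ θ (modDig p n π ⟨u + 1, by omega⟩ k J)))
      = ∑ k ∈ Finset.range p,
          zeta p ((k : ℤ) *
            ((dgt p n (π ⟨u, by omega⟩) I : ℤ) - (dgt p n (π ⟨u, by omega⟩) J : ℤ)))) ∧
    (∑ k ∈ Finset.range p,
        zeta q ((Hval p q n π γ θ (fun i => dgt p n i I)
              - Hval p q n π γ θ (fun i => dgt p n i J))
          - (Hval p q n π γ θ (modDig p n π ⟨u + 1, by omega⟩ k I)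
              - Hval p q n π γ θ (modDig p n π ⟨u + 1, by omega⟩ k J))) = 0) := by
  have hp0 : 0 < p := by omega
  set w : Fin n := ⟨u + 1, by omega⟩ with hw
  have hcJ : dgt p n (π w) J = dgt p n (π w) I :=
    (hlargest w (by simp [hw])).symm
  have hEJ : ∀ h : u + 2 < n, dgt p n (π ⟨u + 2, h⟩) J = dgt p n (π ⟨u + 2, h⟩) I := by
    intro h
    exact (hlargest ⟨u + 2, h⟩ (by simp)).symm
  have hD : ∀ k : ℕ,
      (Hval p q n π γ θ (fun i => dgt p n i I) - Hval p q n π γ θ (fun i => dgt p n i J))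
        - (Hval p q n π γ θ (modDig p n π w k I)
            - Hval p q n π γ θ (modDig p n π w k J))
      = ((q / p : ℕ) : ℤ) *
          ((dgt p n (π ⟨u, by omega⟩) I : ℤ) - (dgt p n (π ⟨u, by omega⟩) J : ℤ)) *
          ((dgt p n (π w) I : ℤ) - (((dgt p n (π w) I + (p - k)) % p : ℕ) : ℤ)) := by
    intro k
    have h1 := Hval_sub_modDig p q n π γ θ u hu k I
    have h2 := Hval_sub_modDig p q n π γ θ u hu k J
    rw [← hw] at h1 h2
    rw [hcJ] at h2
    have hS : (if h : u + 2 < n then (dgt p n (π ⟨u + 2, h⟩) J : ℤ) else 0)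
        = (if h : u + 2 < n then (dgt p n (π ⟨u + 2, h⟩) I : ℤ) else 0) := by
      by_cases h : u + 2 < n
      · rw [dif_pos h, dif_pos h, hEJ h]
      · rw [dif_neg h, dif_neg h]
    rw [hS] at h2
    linear_combination h1 - h2
  have hmod : ∀ k ≤ p - 1,
      (Hval p q n π γ θ (fun i => dgt p n i I) - Hval p q n π γ θ (fun i => dgt p n i J))
        - (Hval p q n π γ θ (modDig p n π w k I)
            - Hval p q n π γ θ (modDig p n π w k J))
      ≡ ((q / p : ℕ) : ℤ) * (k : ℤ) *
          ((dgt p n (π ⟨u, by omega⟩) I : ℤ) - (dgt p n (π ⟨u, by omega⟩) J : ℤ))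
        [ZMOD (q : ℤ)] :=
    fun k hk => cong_aux p q hp hpq k _ _ _ hk _ (hD k)
  have heq : ∑ k ∈ Finset.range p,
      zeta q ((Hval p q n π γ θ (fun i => dgt p n i I)
            - Hval p q n π γ θ (fun i => dgt p n i J))
        - (Hval p q n π γ θ (modDig p n π w k I)
            - Hval p q n π γ θ (modDig p n π w k J)))
      = ∑ k ∈ Finset.range p, zeta p ((k : ℤ) *
          ((dgt p n (π ⟨u, by omega⟩) I : ℤ) - (dgt p n (π ⟨u, by omega⟩) J : ℤ))) := by
    refine Finset.sum_congr rfl fun k hk => ?_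
    have hk' : k ≤ p - 1 := by
      have := Finset.mem_range.mp hk; omega
    refine (zeta_congr (by omega) (hmod k hk')).trans ?_
    rw [mul_assoc]
    exact zeta_qdvp hp0 hq hpq _
  have hzero : ∑ k ∈ Finset.range p,
      zeta q ((Hval p q n π γ θ (fun i => dgt p n i I)
            - Hval p q n π γ θ (fun i => dgt p n i J))
        - (Hval p q n π γ θ (modDig p n π w k I)
            - Hval p q n π γ θ (modDig p n π w k J))) = 0 := by
    refine heq.trans (zeta_sum_eq_zero hp ?_ ?_)
    · have h1 : dgt p n (π ⟨u, by omega⟩) I ≠ dgt p n (π ⟨u, by omega⟩) J := hdiff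
      omega
    · have h1 : dgt p n (π ⟨u, by omega⟩) I < p := Nat.mod_lt _ hp0
      have h2 : dgt p n (π ⟨u, by omega⟩) J < p := Nat.mod_lt _ hp0
      omega
  exact ⟨hmod, heq, hzero⟩
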